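/- Equality conditions for the sandwich: With 0 < α < 1, H(X|Y) = H^{(α)}(X|Y) holds if and only if U(X|Y) = V(X|Y) (equivalently y ↦ H(P_{X|Y=y}) is constant P_Y-a.s.), and H^{(α)}(X|Y) = H_α(X|Y) holds if and only if V(X|Y) = 0. -/

import Mathlib

lemma sandwich_aux_tsum_zero {ι : Type*} {f : ι → ℝ} (hs : Summable f)
    (h0 : ∀ i, 0 ≤ f i) (h : ∑' i, f i = 0) : ∀ i, f i = 0 := by
  intro i
  by_contra hne
  have hi : 0 < f i := (h0 i).lt_of_ne (Ne.symm hne)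
  linarith [Summable.tsum_pos hs h0 i hi]

lemma sandwich_aux_tangent_le (t m : ℝ) :
    (2:ℝ) ^ m * (1 + Real.log 2 * (t - m)) ≤ (2:ℝ) ^ t := by
  have h2 : (0:ℝ) < 2 := two_pos
  have h1 : (2:ℝ) ^ t = (2:ℝ) ^ m * (2:ℝ) ^ (t - m) := by
    rw [← Real.rpow_add h2]; ring_nf
  have h3 : (2:ℝ) ^ (t - m) = Real.exp (Real.log 2 * (t - m)) := by
    rw [Real.rpow_def_of_pos h2]
  have h4 : 1 + Real.log 2 * (t - m) ≤ Real.exp (Real.log 2 * (t - m)) := by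
    have := Real.add_one_le_exp (Real.log 2 * (t - m))
    linarith
  have hm : (0:ℝ) < (2:ℝ) ^ m := Real.rpow_pos_of_pos h2 m
  rw [h1, h3]
  nlinarith

lemma sandwich_aux_tangent_eq {t m : ℝ}
    (h : (2:ℝ) ^ m * (1 + Real.log 2 * (t - m)) = (2:ℝ) ^ t) : t = m := by
  by_contra hne
  have h2 : (0:ℝ) < 2 := two_pos
  have hs : Real.log 2 * (t - m) ≠ 0 := by
    have hl : Real.log 2 ≠ 0 := (Real.log_pos one_lt_two).ne'
    exact mul_ne_zero hl (sub_ne_zero.mpr hne)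
  have h4 : 1 + Real.log 2 * (t - m) < Real.exp (Real.log 2 * (t - m)) := by
    have := Real.add_one_lt_exp hs
    linarith
  have h1 : (2:ℝ) ^ t = (2:ℝ) ^ m * (2:ℝ) ^ (t - m) := by
    rw [← Real.rpow_add h2]; ring_nf
  have h3 : (2:ℝ) ^ (t - m) = Real.exp (Real.log 2 * (t - m)) := by
    rw [Real.rpow_def_of_pos h2]
  have hm : (0:ℝ) < (2:ℝ) ^ m := Real.rpow_pos_of_pos h2 m
  rw [h1, h3] at h
  nlinarith

theorem conditional_entropy_sandwich_equality_conditions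
    {X Y : Type*} [Countable X] [Countable Y]
    (p : X → Y → ℝ) (pY : Y → ℝ) (α : ℝ)
    (hα0 : 0 < α) (hα1 : α < 1)
    (hp : ∀ x y, 0 ≤ p x y)
    (hpY : ∀ y, pY y = ∑' x, p x y)
    (hpYpos : ∀ y, 0 < pY y)
    (hsum : ∑' y, pY y = 1)
    (HXY : ℝ) (Hy : Y → ℝ) (HαKN HαA U V : ℝ)
    (hH : HXY = ∑' y, ∑' x, p x y * Real.logb 2 (pY y / p x y))
    (hHy : ∀ y, Hy y = ∑' x, (p x y / pY y) * Real.logb 2 (pY y / p x y))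
    (hKN : HαKN = (α / (1 - α)) *
      Real.logb 2 (∑' y, pY y * (2 : ℝ) ^ (((1 - α) / α) * Hy y)))
    (hA : HαA = (α / (1 - α)) *
      Real.logb 2 (∑' y, (∑' x, p x y ^ α) ^ (1 / α)))
    (hU : U = ∑' y, ∑' x, p x y * (Real.logb 2 (pY y / p x y) - HXY) ^ 2)
    (hV : V = ∑' y, pY y * ∑' x, (p x y / pY y) * (Real.logb 2 (pY y / p x y) - Hy y) ^ 2)
    (hs1 : Summable fun z : Y × X => p z.2 z.1 * Real.logb 2 (pY z.1 / p z.2 z.1))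
    (hs2 : Summable fun y => pY y * (2 : ℝ) ^ (((1 - α) / α) * Hy y))
    (hs3 : ∀ y, Summable fun x => p x y ^ α)
    (hs4 : Summable fun y => (∑' x, p x y ^ α) ^ (1 / α))
    (hs5 : Summable fun z : Y × X => p z.2 z.1 * (Real.logb 2 (pY z.1 / p z.2 z.1) - HXY) ^ 2)
    (hs6 : Summable fun y => pY y * (HXY - Hy y) ^ 2) :
    (HXY = HαKN ↔ U = V) ∧ (HαKN = HαA ↔ V = 0) := by
  -- notation
  set i : X → Y → ℝ := fun x y => Real.logb 2 (pY y / p x y) with hi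
  -- basic positivity
  have h2 : (0:ℝ) < 2 := two_pos
  have hlog2 : (0:ℝ) < Real.log 2 := Real.log_pos one_lt_two
  have hα1' : (0:ℝ) < 1 - α := by linarith
  have hc : (0:ℝ) < (1 - α) / α := div_pos hα1' hα0
  have hc' : (0:ℝ) < α / (1 - α) := div_pos hα0 hα1'
  have hcc' : (α / (1 - α)) * ((1 - α) / α) = 1 := by
    field_simp
  -- Y is nonempty
  have hY : Nonempty Y := by
    by_contra hempty
    rw [not_nonempty_iff] at hempty
    rw [tsum_empty] at hsum
    norm_num at hsum
  obtain ⟨y0⟩ := hY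
  -- p is summable in x for each y
  have hsp : ∀ y, Summable fun x => p x y := by
    intro y
    by_contra hns
    have := tsum_eq_zero_of_not_summable hns
    have h1 := hpY y
    have h2 := hpYpos y
    rw [this] at h1
    linarith
  -- p * i summable per y
  have hspi : ∀ y, Summable fun x => p x y * i x y := fun y => hs1.prod_factor y
  -- ∑ₓ p x y * i x y = pY y * Hy y
  have hpi_sum : ∀ y, ∑' x, p x y * i x y = pY y * Hy y := by
    intro y
    have hne : pY y ≠ 0 := (hpYpos y).ne'
    have h1 : ∀ x, (p x y / pY y) * i x y = (pY y)⁻¹ * (p x y * i x y) := by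
      intro x; field_simp
    have h2 : Hy y = (pY y)⁻¹ * ∑' x, p x y * i x y := by
      rw [hHy y]
      refine (tsum_congr h1).trans ?_
      exact tsum_mul_left
    rw [h2]
    field_simp
  -- pY summable
  have hsumpY : Summable pY := by
    by_contra hns
    rw [tsum_eq_zero_of_not_summable hns] at hsum
    norm_num at hsum
  -- pY * Hy summable with sum HXY
  have hsPH : Summable fun y => pY y * Hy y := by
    have := hs1.prod
    exact this.congr fun y => hpi_sum y
  have hHXY : HXY = ∑' y, pY y * Hy y := by
    rw [hH]
    exact tsum_congr fun y => hpi_sum y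
  -- per-y squared sums
  have hsq : ∀ y, Summable fun x => p x y * (i x y - HXY) ^ 2 := fun y => hs5.prod_factor y
  have hs6' : Summable fun y => pY y * (Hy y - HXY) ^ 2 := by
    exact hs6.congr fun y => by ring
  -- per-y identity for (i - Hy)^2
  have hkey : ∀ y, (fun x => p x y * (i x y - Hy y) ^ 2) =
      fun x => p x y * (i x y - HXY) ^ 2
        - (2 * (Hy y - HXY)) * (p x y * i x y)
        + ((Hy y - HXY) * (Hy y + HXY)) * p x y := by
    intro y; funext x; ring
  have hsq2 : ∀ y, Summable fun x => p x y * (i x y - Hy y) ^ 2 := by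
    intro y
    rw [hkey y]
    exact (((hsq y).sub ((hspi y).mul_left _)).add ((hsp y).mul_left _))
  have hSy : ∀ y, ∑' x, p x y * (i x y - Hy y) ^ 2 =
      (∑' x, p x y * (i x y - HXY) ^ 2) - pY y * (Hy y - HXY) ^ 2 := by
    intro y
    calc ∑' x, p x y * (i x y - Hy y) ^ 2
        = ∑' x, (p x y * (i x y - HXY) ^ 2
          - (2 * (Hy y - HXY)) * (p x y * i x y)
          + ((Hy y - HXY) * (Hy y + HXY)) * p x y) := by rw [hkey y]
      _ = ((∑' x, p x y * (i x y - HXY) ^ 2)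
            - (2 * (Hy y - HXY)) * ∑' x, p x y * i x y)
          + ((Hy y - HXY) * (Hy y + HXY)) * ∑' x, p x y := by
          rw [Summable.tsum_add (((hsq y).sub ((hspi y).mul_left _))) ((hsp y).mul_left _),
            Summable.tsum_sub (hsq y) ((hspi y).mul_left _), tsum_mul_left, tsum_mul_left]
      _ = (∑' x, p x y * (i x y - HXY) ^ 2) - pY y * (Hy y - HXY) ^ 2 := by
          rw [hpi_sum y, ← hpY y]
          ring
  -- V inner sums
  have hVy : ∀ y, pY y * ∑' x, (p x y / pY y) * (i x y - Hy y) ^ 2 =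
      ∑' x, p x y * (i x y - Hy y) ^ 2 := by
    intro y
    have hne : pY y ≠ 0 := (hpYpos y).ne'
    have h1 : ∀ x, (p x y / pY y) * (i x y - Hy y) ^ 2
        = (pY y)⁻¹ * (p x y * (i x y - Hy y) ^ 2) := by
      intro x; field_simp
    simp_rw [h1]
    rw [tsum_mul_left]
    field_simp
  have hUval : U = ∑' y, ∑' x, p x y * (i x y - HXY) ^ 2 := hU
  have hsA : Summable fun y => ∑' x, p x y * (i x y - HXY) ^ 2 := hs5.prod
  have hVval : V = ∑' y, ∑' x, p x y * (i x y - Hy y) ^ 2 := by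
    rw [hV]
    exact tsum_congr fun y => hVy y
  have hsSy : Summable fun y => ∑' x, p x y * (i x y - Hy y) ^ 2 := by
    have := hsA.sub hs6'
    exact this.congr fun y => (hSy y).symm
  have hUV : U - V = ∑' y, pY y * (Hy y - HXY) ^ 2 := by
    rw [hUval, hVval]
    rw [tsum_congr fun y => hSy y, Summable.tsum_sub hsA hs6']
    ring

  -- ### First equivalence
  set c : ℝ := (1 - α) / α with hcdef
  have hUV_iff : U = V ↔ ∀ y, Hy y = HXY := by
    constructor
    · intro hEq
      have hz : ∑' y, pY y * (Hy y - HXY) ^ 2 = 0 := by rw [← hUV]; linarith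
      have hall := sandwich_aux_tsum_zero hs6'
        (fun y => mul_nonneg (hpYpos y).le (sq_nonneg _)) hz
      intro y
      have := hall y
      have h1 : (Hy y - HXY) ^ 2 = 0 := by
        rcases mul_eq_zero.mp this with h | h
        · exact absurd h (hpYpos y).ne'
        · exact h
      have := pow_eq_zero_iff (n := 2) (by norm_num) |>.mp h1
      linarith [sub_eq_zero.mp this]
    · intro hall
      have : ∀ y, pY y * (Hy y - HXY) ^ 2 = 0 := by
        intro y; rw [hall y]; ring
      have hz : ∑' y, pY y * (Hy y - HXY) ^ 2 = 0 := by
        rw [tsum_congr this]; exact tsum_zero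
      linarith [hUV, hz.symm.trans hUV.symm]
  have hKN_iff : HXY = HαKN ↔ ∀ y, Hy y = HXY := by
    constructor
    · intro hEq
      set S : ℝ := ∑' y, pY y * (2 : ℝ) ^ (c * Hy y) with hSdef
      have hS2 : Summable fun y => pY y * (2 : ℝ) ^ (c * Hy y) := hs2
      have hSpos : 0 < S :=
        Summable.tsum_pos hS2 (fun y => mul_nonneg (hpYpos y).le (Real.rpow_pos_of_pos h2 _).le)
          y0 (mul_pos (hpYpos y0) (Real.rpow_pos_of_pos h2 _))
      have hL : Real.logb 2 S = c * HXY := by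
        have hKN' : HXY = (α / (1 - α)) * Real.logb 2 S := by rw [hEq, hKN]
        rw [hcdef]
        have hane : α ≠ 0 := hα0.ne'
        have h1ane : (1:ℝ) - α ≠ 0 := hα1'.ne'
        field_simp at hKN' ⊢
        linarith [hKN']
      have hSval : S = (2:ℝ) ^ (c * HXY) :=
        ((Real.logb_eq_iff_rpow_eq h2 (by norm_num) hSpos).mp hL).symm
      set C1 : ℝ := (2:ℝ) ^ (c * HXY) * (1 - Real.log 2 * (c * HXY)) with hC1
      set C2 : ℝ := (2:ℝ) ^ (c * HXY) * (Real.log 2 * c) with hC2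
      set g : Y → ℝ := fun y =>
        pY y * (2 : ℝ) ^ (c * Hy y) - (C1 * pY y + C2 * (pY y * Hy y)) with hgdef
      have hg_eq : ∀ y, g y = pY y *
          ((2:ℝ) ^ (c * Hy y)
            - (2:ℝ) ^ (c * HXY) * (1 + Real.log 2 * (c * Hy y - c * HXY))) := by
        intro y; simp only [hgdef, hC1, hC2]; ring
      have hgnn : ∀ y, 0 ≤ g y := by
        intro y
        rw [hg_eq y]
        exact mul_nonneg (hpYpos y).le
          (sub_nonneg.mpr (sandwich_aux_tangent_le (c * Hy y) (c * HXY)))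
      have hsg : Summable g :=
        hS2.sub ((hsumpY.mul_left C1).add (hsPH.mul_left C2))
      have hgsum : ∑' y, g y = 0 := by
        have : ∑' y, g y = S - (C1 * (∑' y, pY y) + C2 * ∑' y, pY y * Hy y) := by
          rw [hgdef]
          rw [Summable.tsum_sub hS2 ((hsumpY.mul_left C1).add (hsPH.mul_left C2)),
            Summable.tsum_add (hsumpY.mul_left C1) (hsPH.mul_left C2),
            tsum_mul_left, tsum_mul_left]
        rw [this, hsum, ← hHXY, hSval, hC1, hC2]
        ring
      have hall := sandwich_aux_tsum_zero hsg hgnn hgsum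
      intro y
      have hgy := hall y
      rw [hg_eq y] at hgy
      rcases mul_eq_zero.mp hgy with h | h
      · exact absurd h (hpYpos y).ne'
      · have heq : (2:ℝ) ^ (c * HXY) * (1 + Real.log 2 * (c * Hy y - c * HXY))
            = (2:ℝ) ^ (c * Hy y) := by linarith
        have := sandwich_aux_tangent_eq heq
        have hcne : c ≠ 0 := hc.ne'
        exact mul_left_cancel₀ hcne this
    · intro hall
      have hScongr : (∑' y, pY y * (2 : ℝ) ^ (c * Hy y))
          = (2:ℝ) ^ (c * HXY) * ∑' y, pY y := by
        rw [← tsum_mul_left]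
        exact tsum_congr fun y => by rw [hall y]; ring
      rw [hKN, hScongr, hsum, mul_one,
        Real.logb_rpow h2 (by norm_num)]
      rw [hcdef]
      field_simp
  -- ### Second equivalence
  set L : Y → ℝ := fun y => Real.logb 2 (pY y) with hLdef
  set m : Y → ℝ := fun y => (1 - α) * (Hy y - L y) with hmdef
  set t : X → Y → ℝ := fun x y => (1 - α) * (i x y - L y) with htdef
  -- pointwise identity p^α = p * 2^t
  have hpα : ∀ y x, p x y ^ α = p x y * (2:ℝ) ^ (t x y) := by
    intro y x
    rcases eq_or_lt_of_le (hp x y) with h0 | hpos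
    · rw [← h0, Real.zero_rpow hα0.ne', zero_mul]
    · have hiv : i x y = L y - Real.logb 2 (p x y) := by
        simp only [hi, hLdef]
        rw [Real.logb_div (hpYpos y).ne' hpos.ne']
      have ht' : t x y = Real.logb 2 (p x y) * (α - 1) := by
        simp only [htdef, hiv]; ring
      have h2t : (2:ℝ) ^ (t x y) = p x y ^ (α - 1) := by
        rw [ht', Real.rpow_mul (by norm_num : (0:ℝ) ≤ 2),
          Real.rpow_logb h2 (by norm_num) hpos]
      rw [h2t, show α = (α - 1) + 1 by ring, Real.rpow_add_one hpos.ne']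
      ring
  set Spα : Y → ℝ := fun y => ∑' x, p x y ^ α with hSpαdef
  set A : Y → ℝ := fun y => (2:ℝ) ^ (m y) * (1 - Real.log 2 * ((1 - α) * Hy y)) with hAdef
  set B : Y → ℝ := fun y => (2:ℝ) ^ (m y) * (Real.log 2 * (1 - α)) with hBdef
  set gap2 : Y → X → ℝ := fun y x =>
    p x y ^ α - (A y * p x y + B y * (p x y * i x y)) with hgap2def
  have hgap2eq : ∀ y x, gap2 y x =
      p x y * ((2:ℝ) ^ (t x y)
        - (2:ℝ) ^ (m y) * (1 + Real.log 2 * (t x y - m y))) := by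
    intro y x
    simp only [hgap2def, hpα y x, hAdef, hBdef, htdef, hmdef]
    ring
  have hgap2nn : ∀ y x, 0 ≤ gap2 y x := by
    intro y x
    rw [hgap2eq y x]
    exact mul_nonneg (hp x y)
      (sub_nonneg.mpr (sandwich_aux_tangent_le (t x y) (m y)))
  have hsgap2 : ∀ y, Summable (gap2 y) :=
    fun y => (hs3 y).sub (((hsp y).mul_left (A y)).add ((hspi y).mul_left (B y)))
  have hgap2sum : ∀ y, ∑' x, gap2 y x = Spα y - pY y * (2:ℝ) ^ (m y) := by
    intro y
    have h1 : ∑' x, gap2 y x = Spα y - (A y * pY y + B y * (pY y * Hy y)) := by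
      simp only [hgap2def]
      rw [Summable.tsum_sub (hs3 y) (((hsp y).mul_left (A y)).add ((hspi y).mul_left (B y))),
        Summable.tsum_add ((hsp y).mul_left (A y)) ((hspi y).mul_left (B y)),
        tsum_mul_left, tsum_mul_left, hpi_sum y, ← hpY y]
    rw [h1]
    simp only [hAdef, hBdef]
    ring
  have hSpα_ge : ∀ y, pY y * (2:ℝ) ^ (m y) ≤ Spα y := by
    intro y
    have : 0 ≤ ∑' x, gap2 y x := tsum_nonneg (hgap2nn y)
    rw [hgap2sum y] at this
    linarith
  -- relate pY * 2^m to G^α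
  set G : Y → ℝ := fun y => pY y * (2:ℝ) ^ (c * Hy y) with hGdef
  have hGpos : ∀ y, 0 < G y :=
    fun y => mul_pos (hpYpos y) (Real.rpow_pos_of_pos h2 _)
  have hRG : ∀ y, pY y * (2:ℝ) ^ (m y) = G y ^ α := by
    intro y
    have hca : c * Hy y * α = (1 - α) * Hy y := by
      rw [hcdef]; field_simp
    have hGα : G y ^ α = pY y ^ α * (2:ℝ) ^ ((1 - α) * Hy y) := by
      rw [hGdef]
      rw [Real.mul_rpow (hpYpos y).le (Real.rpow_pos_of_pos h2 _).le,
        ← Real.rpow_mul (by norm_num : (0:ℝ) ≤ 2), hca]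
    have hm' : m y = (1 - α) * Hy y + L y * (α - 1) := by
      simp only [hmdef]; ring
    have h2L : (2:ℝ) ^ (L y * (α - 1)) = pY y ^ (α - 1) := by
      rw [Real.rpow_mul (by norm_num : (0:ℝ) ≤ 2),
        Real.rpow_logb h2 (by norm_num) (hpYpos y)]
    rw [hGα, hm', Real.rpow_add h2, h2L]
    rw [show α = (α - 1) + 1 by ring, Real.rpow_add_one (hpYpos y).ne']
    ring
  set T : Y → ℝ := fun y => Spα y ^ (1/α) with hTdef
  have hGT : ∀ y, G y = (G y ^ α) ^ (1/α) := by
    intro y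
    rw [← Real.rpow_mul (hGpos y).le, mul_one_div_cancel hα0.ne', Real.rpow_one]
  have hTG : ∀ y, G y ≤ T y := by
    intro y
    rw [hGT y, hTdef]
    exact Real.rpow_le_rpow (Real.rpow_pos_of_pos (hGpos y) α).le
      (by rw [← hRG y]; exact hSpα_ge y) (one_div_pos.mpr hα0).le
  have hTeq : ∀ y, T y = G y → Spα y = pY y * (2:ℝ) ^ (m y) := by
    intro y hEq
    by_contra hne
    have hlt : pY y * (2:ℝ) ^ (m y) < Spα y := (hSpα_ge y).lt_of_ne (Ne.symm hne)
    have : G y < T y := by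
      rw [hGT y, hTdef]
      exact Real.rpow_lt_rpow (Real.rpow_pos_of_pos (hGpos y) α).le
        (by rw [← hRG y]; exact hlt) (one_div_pos.mpr hα0)
    linarith [hEq]
  -- the common condition
  set Q : Prop := ∀ y x, p x y * (i x y - Hy y) ^ 2 = 0 with hQdef
  have hgapQ : ∀ y, (∀ x, gap2 y x = 0) ↔ (∀ x, p x y * (i x y - Hy y) ^ 2 = 0) := by
    intro y
    constructor
    · intro h x
      rcases eq_or_lt_of_le (hp x y) with h0 | hpos
      · rw [← h0]; ring
      · have := h x
        rw [hgap2eq y x] at this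
        rcases mul_eq_zero.mp this with h' | h'
        · exact absurd h'.symm hpos.ne
        · have heq : (2:ℝ) ^ (m y) * (1 + Real.log 2 * (t x y - m y))
              = (2:ℝ) ^ (t x y) := by linarith
          have htm := sandwich_aux_tangent_eq heq
          have : i x y - Hy y = 0 := by
            have h1 : (1 - α) * (i x y - L y) = (1 - α) * (Hy y - L y) := htm
            have := mul_left_cancel₀ hα1'.ne' h1
            linarith
          rw [this]; ring
    · intro h x
      rcases eq_or_lt_of_le (hp x y) with h0 | hpos
      · rw [hgap2eq y x, ← h0]; ring
      · have := h x
        have hiHy : i x y = Hy y := by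
          rcases mul_eq_zero.mp this with h' | h'
          · exact absurd h'.symm hpos.ne
          · have := pow_eq_zero_iff (n := 2) (by norm_num) |>.mp h'
            linarith [sub_eq_zero.mp this]
        have htm : t x y = m y := by simp only [htdef, hmdef, hiHy]
        rw [hgap2eq y x, htm]
        ring
  have hTG_iff : (∀ y, T y = G y) ↔ Q := by
    constructor
    · intro h y
      have hz := hTeq y (h y)
      have : ∑' x, gap2 y x = 0 := by rw [hgap2sum y, hz]; ring
      exact (hgapQ y).mp (sandwich_aux_tsum_zero (hsgap2 y) (hgap2nn y) this)
    · intro hQ y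
      have hz : ∀ x, gap2 y x = 0 := (hgapQ y).mpr (hQ y)
      have : Spα y = pY y * (2:ℝ) ^ (m y) := by
        have h1 : ∑' x, gap2 y x = 0 := by rw [tsum_congr hz]; exact tsum_zero
        rw [hgap2sum y] at h1
        linarith
      show Spα y ^ (1/α) = G y
      rw [this, hRG y]
      exact (hGT y).symm
  have hV_iff : V = 0 ↔ Q := by
    constructor
    · intro hVz y
      have hSynn : ∀ y, 0 ≤ ∑' x, p x y * (i x y - Hy y) ^ 2 :=
        fun y => tsum_nonneg fun x => mul_nonneg (hp x y) (sq_nonneg _)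
      have h0 : ∑' y, ∑' x, p x y * (i x y - Hy y) ^ 2 = 0 := by
        rw [← hVval]; exact hVz
      have := sandwich_aux_tsum_zero hsSy hSynn h0 y
      exact sandwich_aux_tsum_zero (hsq2 y)
        (fun x => mul_nonneg (hp x y) (sq_nonneg _)) this
    · intro hQ
      rw [hVval]
      have : ∀ y, ∑' x, p x y * (i x y - Hy y) ^ 2 = 0 := by
        intro y; rw [tsum_congr (hQ y)]; exact tsum_zero
      rw [tsum_congr this]; exact tsum_zero
  have hA_iff : HαKN = HαA ↔ ∀ y, T y = G y := by
    have hSpos : 0 < ∑' y, G y :=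
      Summable.tsum_pos hs2 (fun y => (hGpos y).le) y0 (hGpos y0)
    have hS'pos : 0 < ∑' y, T y :=
      lt_of_lt_of_le hSpos (Summable.tsum_le_tsum hTG hs2 hs4)
    constructor
    · intro hEq
      have hlogb : Real.logb 2 (∑' y, G y) = Real.logb 2 (∑' y, T y) := by
        rw [hKN, hA] at hEq
        exact mul_left_cancel₀ hc'.ne' hEq
      have hSS : (∑' y, G y) = ∑' y, T y := by
        have := congrArg (fun z => (2:ℝ) ^ z) hlogb
        simpa [Real.rpow_logb h2 (by norm_num) hSpos,
          Real.rpow_logb h2 (by norm_num) hS'pos] using this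
      have hdz : ∑' y, (T y - G y) = 0 := by
        rw [Summable.tsum_sub hs4 hs2, ← hSS]; ring
      have := sandwich_aux_tsum_zero (hs4.sub hs2)
        (fun y => sub_nonneg.mpr (hTG y)) hdz
      intro y; linarith [this y]
    · intro h
      rw [hKN, hA]
      congr 1
      exact congrArg (Real.logb 2) (tsum_congr fun y => (h y).symm)
  exact ⟨hKN_iff.trans hUV_iff.symm, (hA_iff.trans hTG_iff).trans hV_iff.symm⟩
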